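/- Let t ≥ 1, let p = (p₁,…,p_t) be a vector of positive integers, γ ≥ 0 a natural number, α a rational number, and n = (n₁,…,n_t) a vector of natural numbers. Define Q(m; p; γ) = γ/(m·p + γ) * multinomial(m·p + γ; m₁,…,m_t, m·(p−1)+γ) when m·p+γ > 0 (and Q(0;p;0) interpreted as the empty-forest count). Then ∑_{0 ≤ i ≤ n} (−1)^{i₁+⋯+i_t} * multinomial((p−1)·(n−i) + α; i₁,…,i_t, (p−1)·(n−i)+α−∑_j i_j) * Q(n−i; p; γ) = (−1)^{n₁+⋯+n_t} * multinomial(α−γ; n₁,…,n_t, α−γ−∑_j n_j), where generalized multinomial coefficients with rational top entry x are defined as multinomial(x; m₁,…,m_{t-1}, rest) = C(x,m₁)*C(x−m₁,m₂)*⋯*C(x−m₁−⋯−m_{t−2}, m_{t−1}) with C the generalized binomial coefficient. -/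

import Mathlib

/-- Generalized multinomial coefficient with rational top entry `x` and lower
entries `m 0, …, m (t-1)` (the final "rest" entry being implicit):
`C(x, m₀) * C(x - m₀, m₁) * ⋯`. -/
noncomputable def gmultinomial {t : ℕ} (x : ℚ) (m : Fin t → ℕ) : ℚ :=
  ∏ j, Ring.choose (x - ∑ k ∈ Finset.Iio j, (m k : ℚ)) (m j)

/-- The vector generalization `Q(m; p; γ)` of the Catalan numbers, counting
ordered forests with `γ` component trees and `m j` internal vertices of
outdegree `p j`; when `m·p + γ = 0` (empty forest with `γ = 0`) it is `1`. -/
noncomputable def Qvec {t : ℕ} (m p : Fin t → ℕ) (γ : ℕ) : ℚ :=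
  if (∑ j, m j * p j) + γ = 0 then 1
  else ((γ : ℚ) / ((∑ j, m j * p j) + γ)) *
    gmultinomial (((∑ j, m j * p j : ℕ) : ℚ) + γ) m


namespace Stmt10Aux
open Finset

noncomputable def D (x : ℚ) (k : ℕ) : ℚ := ∏ i ∈ Finset.range k, (x - i)

lemma D_succ (x : ℚ) (k : ℕ) : D x (k+1) = D x k * (x - k) := Finset.prod_range_succ _ _

lemma D_succ' (x : ℚ) (k : ℕ) : D (x+1) (k+1) = (x+1) * D x k := by
  rw [D, Finset.prod_range_succ']
  rw [show ∏ i ∈ range k, (x + 1 - ((i+1 : ℕ):ℚ)) = D x k from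
    Finset.prod_congr rfl (by intros; push_cast; ring)]
  push_cast; ring

lemma smeval_desc (x : ℚ) (k : ℕ) : (descPochhammer ℤ k).smeval x = D x k := by
  induction k with
  | zero => simp [D, descPochhammer_zero, Polynomial.smeval_one]
  | succ k ih =>
    rw [descPochhammer_succ_right, Polynomial.smeval_mul, ih, D_succ]
    congr 1
    simp [Polynomial.smeval_sub, Polynomial.smeval_X, Polynomial.smeval_natCast]

lemma choose_eq (x : ℚ) (k : ℕ) : Ring.choose x k = D x k / k.factorial := by
  have h := Ring.descPochhammer_eq_factorial_smul_choose x k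
  rw [smeval_desc] at h
  rw [h, nsmul_eq_mul]
  field_simp

lemma D_add (x : ℚ) (a b : ℕ) : D x (a+b) = D x a * D (x - a) b := by
  induction b with
  | zero => simp [D]
  | succ b ih =>
    rw [show a + (b+1) = (a+b)+1 from rfl, D_succ, ih, D_succ]
    push_cast
    ring

lemma prod_D_range (T : ℕ) (g : ℕ → ℕ) (x : ℚ) :
    ∏ j ∈ range T, D (x - ∑ k ∈ range j, (g k : ℚ)) (g j)
      = D x (∑ j ∈ range T, g j) := by
  induction T with
  | zero => simp [D]
  | succ T ih =>
    rw [Finset.prod_range_succ, ih, Finset.sum_range_succ, D_add]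
    congr 2
    push_cast
    ring

lemma gm_eq' {t : ℕ} (x : ℚ) (m : Fin t → ℕ) :
    gmultinomial x m = D x (∑ j, m j) / ∏ j, ((m j).factorial : ℚ) := by
  classical
  set g : ℕ → ℕ := fun k => if h : k < t then m ⟨k, h⟩ else 0 with hg
  have hIio : ∀ j : Fin t, ∑ k ∈ Finset.Iio j, (m k : ℚ) = ∑ k ∈ range j.val, (g k : ℚ) := by
    intro j
    rw [← Nat.Iio_eq_range, ← Fin.map_valEmbedding_Iio, Finset.sum_map]
    apply Finset.sum_congr rfl
    intro k hk
    simp [hg, k.isLt]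
  have h1 : gmultinomial x m = ∏ j ∈ range t, Ring.choose (x - ∑ k ∈ range j, (g k : ℚ)) (g j) := by
    rw [gmultinomial, ← Fin.prod_univ_eq_prod_range]
    apply Finset.prod_congr rfl
    intro j _
    rw [hIio]
    simp [hg, j.isLt]
  rw [h1]
  have h2 : ∀ j ∈ range t, Ring.choose (x - ∑ k ∈ range j, (g k : ℚ)) (g j)
      = D (x - ∑ k ∈ range j, (g k : ℚ)) (g j) / ((g j).factorial : ℚ) := by
    intro j _; rw [choose_eq]
  rw [Finset.prod_congr rfl h2, Finset.prod_div_distrib, prod_D_range]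
  congr 1
  · congr 1
    rw [← Fin.sum_univ_eq_sum_range]
    apply Finset.sum_congr rfl
    intro j _
    simp [hg, j.isLt]
  · rw [← Fin.prod_univ_eq_prod_range]
    apply Finset.prod_congr rfl
    intro j _
    simp [hg, j.isLt]

def ev {t : ℕ} (j : Fin t) : Fin t → ℕ := Pi.single j 1

lemma ev_apply {t : ℕ} (j k : Fin t) : ev j k = if k = j then 1 else 0 := by
  simp [ev, Pi.single_apply]

lemma prod_fact_sub {t : ℕ} (m : Fin t → ℕ) (j : Fin t) (h : 1 ≤ m j) :
    (m j : ℚ) * ∏ k, (((m - ev j) k).factorial : ℚ)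
      = ∏ k, ((m k).factorial : ℚ) := by
  rw [← Finset.mul_prod_erase univ (fun k => (((m - ev j) k).factorial : ℚ)) (mem_univ j),
      ← Finset.mul_prod_erase univ (fun k => ((m k).factorial : ℚ)) (mem_univ j)]
  have h2 : ∀ k ∈ univ.erase j, (((m - ev j) k).factorial : ℚ) = ((m k).factorial : ℚ) := by
    intro k hk
    have : (m - ev j) k = m k := by
      simp [Pi.sub_apply, ev_apply, (Finset.mem_erase.mp hk).1]
    rw [this]
  rw [Finset.prod_congr rfl h2, ← mul_assoc]
  congr 1
  have h1 : (m - ev j) j = m j - 1 := by simp [Pi.sub_apply, ev_apply]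
  rw [h1, ← Nat.cast_mul, Nat.mul_factorial_pred (Nat.one_le_iff_ne_zero.mp h)]

lemma sum_sub_single {t : ℕ} (m : Fin t → ℕ) (j : Fin t) (h : 1 ≤ m j) :
    ∑ k, (m - ev j) k + 1 = ∑ k, m k := by
  have hpt : ∀ k ∈ univ, (m - ev j) k + ev j k = m k := by
    intro k _
    by_cases hk : k = j
    · subst hk; simp [Pi.sub_apply, ev_apply]; omega
    · simp [Pi.sub_apply, ev_apply, hk]
  have hev : ∑ k, ev j k = 1 := by
    simp [ev_apply]
  calc ∑ k, (m - ev j) k + 1 = ∑ k, (m - ev j) k + ∑ k, ev j k := by rw [hev]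
    _ = ∑ k, ((m - ev j) k + ev j k) := (Finset.sum_add_distrib).symm
    _ = ∑ k, m k := Finset.sum_congr rfl hpt

lemma dot_sub_single {t : ℕ} (m p : Fin t → ℕ) (j : Fin t) (h : 1 ≤ m j) :
    ∑ k, (m - ev j) k * p k + p j = ∑ k, m k * p k := by
  have hpt : ∀ k ∈ univ, (m - ev j) k * p k + ev j k * p k = m k * p k := by
    intro k _
    by_cases hk : k = j
    · subst hk
      have h1 : (m - ev k) k = m k - 1 := by simp [Pi.sub_apply, ev_apply]
      have h2 : ev k k = 1 := by simp [ev_apply]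
      rw [h1, h2, one_mul]
      cases' Nat.exists_eq_add_of_le h with c hc
      rw [hc, Nat.add_sub_cancel_left]; ring
    · simp [Pi.sub_apply, ev_apply, hk]
  have hev : ∑ k, ev j k * p k = p j := by
    have : ∀ k ∈ univ, ev j k * p k = if k = j then p j else 0 := by
      intro k _
      by_cases hk : k = j
      · subst hk; simp [ev_apply]
      · simp [ev_apply, hk]
    rw [Finset.sum_congr rfl this, Finset.sum_ite_eq' univ j]
    simp
  calc ∑ k, (m - ev j) k * p k + p j
      = ∑ k, (m - ev j) k * p k + ∑ k, ev j k * p k := by rw [hev]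
    _ = ∑ k, ((m - ev j) k * p k + ev j k * p k) := (Finset.sum_add_distrib).symm
    _ = ∑ k, m k * p k := Finset.sum_congr rfl hpt

lemma gm_zero' {t : ℕ} (x : ℚ) : gmultinomial x (0 : Fin t → ℕ) = 1 := by
  rw [gm_eq']
  simp [D]

lemma gm_pascal' {t : ℕ} (β : ℚ) (n : Fin t → ℕ) :
    gmultinomial (β+1) n = gmultinomial β n
      + ∑ j, if 1 ≤ n j then gmultinomial β (n - ev j) else 0 := by
  by_cases h0 : ∑ j, n j = 0
  · have hn : n = 0 := by
      funext j
      have := Finset.sum_eq_zero_iff.mp h0 j (Finset.mem_univ j)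
      simpa using this
    subst hn
    simp [gm_zero']
  · obtain ⟨s', hs⟩ : ∃ s', ∑ j, n j = s' + 1 := ⟨(∑ j, n j) - 1, by omega⟩
    have hPne : (∏ k, ((n k).factorial : ℚ)) ≠ 0 :=
      Finset.prod_ne_zero_iff.mpr (fun k _ => Nat.cast_ne_zero.mpr (Nat.factorial_ne_zero _))
    have hterm : ∀ j, (if 1 ≤ n j then gmultinomial β (n - ev j) else 0)
        = (if 1 ≤ n j then (n j : ℚ) else 0) * (D β s' / ∏ k, ((n k).factorial : ℚ)) := by
      intro j
      split
      case isTrue hj =>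
        rw [gm_eq']
        have hsum : ∑ k, (n - ev j) k = s' := by
          have := sum_sub_single n j hj; omega
        rw [hsum]
        have hf := prod_fact_sub n j hj
        have hP'ne : (∏ k, (((n - ev j) k).factorial : ℚ)) ≠ 0 :=
          Finset.prod_ne_zero_iff.mpr (fun k _ => Nat.cast_ne_zero.mpr (Nat.factorial_ne_zero _))
        simp only [Pi.sub_apply] at hf ⊢
        field_simp
        linear_combination (- D β s') * hf
      case isFalse => simp
    rw [Finset.sum_congr rfl (fun j _ => hterm j), ← Finset.sum_mul]
    have hs' : (∑ j, (if 1 ≤ n j then (n j:ℚ) else 0)) = ((s' + 1 : ℕ) : ℚ) := by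
      rw [← hs, Nat.cast_sum]
      apply Finset.sum_congr rfl
      intro j _
      split
      · rfl
      · rename_i hj
        have : n j = 0 := by omega
        simp [this]
    rw [hs', gm_eq', gm_eq', hs, D_succ', D_succ]
    push_cast
    ring

lemma Q_zero' {t : ℕ} (p : Fin t → ℕ) (γ : ℕ) : Qvec 0 p γ = 1 := by
  rw [Qvec]
  by_cases hγ : γ = 0
  · subst hγ; simp
  · rw [if_neg (by simpa using hγ)]
    rw [gm_zero']
    simp [hγ]

lemma Q_val {t : ℕ} (m p : Fin t → ℕ) (γ : ℕ) (h : (∑ k, m k * p k) + γ ≠ 0) :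
    Qvec m p γ = (γ : ℚ) / ((((∑ k, m k * p k) + γ : ℕ)) : ℚ)
      * D ((((∑ k, m k * p k) + γ : ℕ)) : ℚ) (∑ k, m k) / ∏ k, ((m k).factorial : ℚ) := by
  rw [Qvec, if_neg h, gm_eq']
  push_cast
  ring

lemma Q_rec {t : ℕ} (m p : Fin t → ℕ) (hp : ∀ j, 1 ≤ p j) (γ : ℕ) :
    Qvec m p (γ+1) = Qvec m p γ
      + ∑ j, if 1 ≤ m j then Qvec (m - ev j) p (γ + p j) else 0 := by
  by_cases hm : m = 0
  · subst hm
    simp [Q_zero']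
  · obtain ⟨j₀, hj₀⟩ := Function.ne_iff.mp hm
    have hmj₀ : 1 ≤ m j₀ := by simpa [Nat.one_le_iff_ne_zero] using hj₀
    have hN₀ : 1 ≤ ∑ k, m k * p k := by
      calc 1 ≤ m j₀ * p j₀ := Nat.one_le_iff_ne_zero.mpr
              (Nat.mul_ne_zero (by omega) (by have := hp j₀; omega))
        _ ≤ ∑ k, m k * p k :=
            Finset.single_le_sum (f := fun k => m k * p k) (fun k _ => Nat.zero_le _)
              (Finset.mem_univ j₀)
    have hs : 1 ≤ ∑ k, m k := by
      calc 1 ≤ m j₀ := hmj₀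
        _ ≤ ∑ k, m k := Finset.single_le_sum (f := fun k => m k) (fun k _ => Nat.zero_le _)
              (Finset.mem_univ j₀)
    set N₀ := ∑ k, m k * p k with hN₀def
    set s := ∑ k, m k with hsdef
    obtain ⟨s', hs_eq⟩ : ∃ s', s = s' + 1 := ⟨s - 1, by omega⟩
    have hPne : (∏ k, ((m k).factorial : ℚ)) ≠ 0 :=
      Finset.prod_ne_zero_iff.mpr (fun k _ => Nat.cast_ne_zero.mpr (Nat.factorial_ne_zero _))
    have hNne : ((N₀ + γ : ℕ) : ℚ) ≠ 0 := Nat.cast_ne_zero.mpr (by omega)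
    rw [Q_val m p (γ+1) (by omega), Q_val m p γ (by omega)]
    rw [← hN₀def, ← hsdef]
    have hc1 : ((N₀ + (γ+1) : ℕ) : ℚ) = ((N₀ + γ : ℕ) : ℚ) + 1 := by push_cast; ring
    rw [hc1, hs_eq, D_succ', D_succ]
    have hterm : ∀ j, (if 1 ≤ m j then Qvec (m - ev j) p (γ + p j) else 0)
        = (if 1 ≤ m j then (((γ + p j) * m j : ℕ) : ℚ) else 0)
          * (D ((N₀ + γ : ℕ) : ℚ) s' / (((N₀ + γ : ℕ) : ℚ) * ∏ k, ((m k).factorial : ℚ))) := by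
      intro j
      split
      case isFalse => simp
      case isTrue hj =>
        have hA : (∑ k, (m - ev j) k * p k) + (γ + p j) = N₀ + γ := by
          have := dot_sub_single m p j hj; omega
        have hB : ∑ k, (m - ev j) k = s' := by
          have := sum_sub_single m j hj; omega
        rw [Q_val (m - ev j) p (γ + p j) (by omega), hA, hB]
        have hf := prod_fact_sub m j hj
        have hP'ne : (∏ k, (((m - ev j) k).factorial : ℚ)) ≠ 0 :=
          Finset.prod_ne_zero_iff.mpr (fun k _ => Nat.cast_ne_zero.mpr (Nat.factorial_ne_zero _))
        simp only [Pi.sub_apply] at hf hP'ne ⊢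
        have hNne' : ((N₀:ℚ) + (γ:ℚ)) ≠ 0 := by exact_mod_cast hNne
        push_cast
        field_simp
        linear_combination (-((γ:ℚ) + (p j : ℚ))) * D ((N₀:ℚ) + (γ:ℚ)) s' * hf
    rw [Finset.sum_congr rfl (fun j _ => hterm j), ← Finset.sum_mul]
    have hsum2 : (∑ j, (if 1 ≤ m j then (((γ + p j) * m j : ℕ) : ℚ) else 0))
        = ((γ * s + N₀ : ℕ) : ℚ) := by
      have h1 : ∀ j ∈ univ, (if 1 ≤ m j then (((γ + p j) * m j : ℕ) : ℚ) else 0)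
          = ((γ * m j + m j * p j : ℕ) : ℚ) := by
        intro j _
        split
        · push_cast; ring
        · rename_i hj
          have : m j = 0 := by omega
          simp [this]
      rw [Finset.sum_congr rfl h1, ← Nat.cast_sum]
      congr 1
      rw [Finset.sum_add_distrib, ← Finset.mul_sum, ← hsdef, ← hN₀def]
    rw [hsum2]
    push_cast [hs_eq]
    field_simp
    ring

noncomputable def F {t : ℕ} (p n : Fin t → ℕ) (α : ℚ) (γ : ℕ) : ℚ :=
  ∑ i ∈ Finset.Icc (0 : Fin t → ℕ) n,
    (-1 : ℚ) ^ (∑ j, i j) *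
      gmultinomial (((∑ j, (p j - 1) * (n j - i j) : ℕ) : ℚ) + α) i *
      Qvec (n - i) p γ

lemma F_nil {t : ℕ} (p : Fin t → ℕ) (α : ℚ) (γ : ℕ) : F p 0 α γ = 1 := by
  rw [F, Finset.Icc_self, Finset.sum_singleton]
  simp [gm_zero', Q_zero']

lemma L_gamma0 {t : ℕ} (p : Fin t → ℕ) (hp : ∀ j, 1 ≤ p j) (n : Fin t → ℕ) (α : ℚ) :
    F p n α 0 = (-1 : ℚ) ^ (∑ j, n j) * gmultinomial α n := by
  rw [F]
  have hmem : n ∈ Finset.Icc (0 : Fin t → ℕ) n :=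
    Finset.mem_Icc.mpr ⟨fun j => Nat.zero_le _, le_refl n⟩
  rw [Finset.sum_eq_single_of_mem n hmem]
  · have h0 : ∀ j, n j - n j = 0 := fun j => Nat.sub_self _
    have h1 : (∑ j, (p j - 1) * (n j - n j) : ℕ) = 0 := by simp [h0]
    have h2 : n - n = (0 : Fin t → ℕ) := by funext k; simp [Pi.sub_apply]
    rw [h1, h2, Q_zero']
    simp
  · intro i hi hne
    have hle := (Finset.mem_Icc.mp hi).2
    obtain ⟨k, hk⟩ := Function.ne_iff.mp hne
    have hklt : i k < n k := lt_of_le_of_ne (hle k) hk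
    have hQ : Qvec (n - i) p 0 = 0 := by
      rw [Qvec, if_neg]
      · simp
      · have h1 : 1 ≤ (n - i) k * p k := by
          have := hp k
          have : 1 ≤ (n - i) k := by simp [Pi.sub_apply]; omega
          exact Nat.one_le_iff_ne_zero.mpr (Nat.mul_ne_zero (by omega) (by have := hp k; omega))
        have h2 : (n - i) k * p k ≤ ∑ j, (n - i) j * p j :=
          Finset.single_le_sum (f := fun j => (n - i) j * p j) (fun _ _ => Nat.zero_le _)
            (Finset.mem_univ k)
        omega
    rw [hQ, mul_zero]

lemma filter_Icc {t : ℕ} (n : Fin t → ℕ) (j : Fin t) (hj : 1 ≤ n j) :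
    (Finset.Icc (0 : Fin t → ℕ) n).filter (fun i => 1 ≤ (n - i) j)
      = Finset.Icc 0 (n - ev j) := by
  ext i
  simp only [Finset.mem_filter, Finset.mem_Icc, Pi.le_def, Pi.zero_apply, Pi.sub_apply]
  constructor
  · rintro ⟨⟨-, h2⟩, h3⟩
    refine ⟨fun k => Nat.zero_le _, fun k => ?_⟩
    by_cases hk : k = j
    · subst hk
      have : ev k k = 1 := by simp [ev_apply]
      rw [this]
      omega
    · have : ev j k = 0 := by simp [ev_apply, hk]
      rw [this]
      have := h2 k
      omega
  · rintro ⟨-, h2⟩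
    have hevj : ev j j = 1 := by simp [ev_apply]
    refine ⟨⟨fun k => Nat.zero_le _, fun k => ?_⟩, ?_⟩
    · have := h2 k
      have := Nat.sub_le (n k) (ev j k)
      omega
    · have := h2 j
      rw [hevj] at this
      omega

lemma F_rec {t : ℕ} (p : Fin t → ℕ) (hp : ∀ j, 1 ≤ p j) (n : Fin t → ℕ) (γ : ℕ) (α : ℚ) :
    F p n α (γ+1) = F p n α γ
      + ∑ j, if 1 ≤ n j then F p (n - ev j) (α + ((p j - 1 : ℕ) : ℚ)) (γ + p j) else 0 := by
  have h1 : ∀ i ∈ Finset.Icc (0 : Fin t → ℕ) n,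
      (-1 : ℚ) ^ (∑ j, i j) *
        gmultinomial (((∑ j, (p j - 1) * (n j - i j) : ℕ) : ℚ) + α) i *
        Qvec (n - i) p (γ+1)
      = ((-1 : ℚ) ^ (∑ j, i j) *
          gmultinomial (((∑ j, (p j - 1) * (n j - i j) : ℕ) : ℚ) + α) i *
          Qvec (n - i) p γ)
        + ∑ j, (if 1 ≤ (n - i) j then
            (-1 : ℚ) ^ (∑ j, i j) *
            gmultinomial (((∑ j, (p j - 1) * (n j - i j) : ℕ) : ℚ) + α) i *
            Qvec ((n - i) - ev j) p (γ + p j) else 0) := by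
    intro i _
    rw [Q_rec (n - i) p hp γ, mul_add, Finset.mul_sum]
    congr 1
    apply Finset.sum_congr rfl
    intro j _
    rw [mul_ite, mul_zero]
  rw [F, Finset.sum_congr rfl h1, Finset.sum_add_distrib]
  congr 1
  rw [Finset.sum_comm]
  apply Finset.sum_congr rfl
  intro j _
  by_cases hnj : 1 ≤ n j
  · rw [if_pos hnj]
    rw [Finset.sum_ite, Finset.sum_const_zero, add_zero, filter_Icc n j hnj, F]
    apply Finset.sum_congr rfl
    intro i hi
    have hile : ∀ k, i k ≤ (n - ev j) k := (Finset.mem_Icc.mp hi).2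
    have hij : i j ≤ n j - 1 := by
      have := hile j
      simpa [Pi.sub_apply, ev_apply] using this
    have hQ : (n - i) - ev j = (n - ev j) - i := by
      funext k
      simp only [Pi.sub_apply]
      omega
    have hns : (∑ k, (p k - 1) * (n k - i k))
        = (∑ k, (p k - 1) * ((n - ev j) k - i k)) + (p j - 1) := by
      have hpt : ∀ k ∈ univ, (p k - 1) * (n k - i k)
          = (p k - 1) * ((n - ev j) k - i k) + (if k = j then p j - 1 else 0) := by
        intro k _
        by_cases hk : k = j
        · subst hk
          rw [if_pos rfl]
          have he : (n - ev k) k = n k - 1 := by simp [Pi.sub_apply, ev_apply]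
          rw [he]
          have h5 : n k - i k = (n k - 1 - i k) + 1 := by omega
          rw [h5, Nat.mul_succ]
        · rw [if_neg hk]
          have he : (n - ev j) k = n k := by simp [Pi.sub_apply, ev_apply, hk]
          rw [he, add_zero]
      rw [Finset.sum_congr rfl hpt, Finset.sum_add_distrib, Finset.sum_ite_eq' univ j]
      simp
    have harg : (((∑ k, (p k - 1) * (n k - i k) : ℕ) : ℚ) + α)
        = ((∑ k, (p k - 1) * ((n - ev j) k - i k) : ℕ) : ℚ) + (α + ((p j - 1 : ℕ) : ℚ)) := by
      rw [hns]
      push_cast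
      ring
    rw [harg, hQ]
  · rw [if_neg hnj]
    apply Finset.sum_eq_zero
    intro i _
    rw [if_neg]
    simp only [Pi.sub_apply]
    omega

lemma key {t : ℕ} (p : Fin t → ℕ) (hp : ∀ j, 1 ≤ p j) :
    ∀ s : ℕ, ∀ n : Fin t → ℕ, ∑ j, n j ≤ s → ∀ (γ : ℕ) (α : ℚ),
      F p n α γ = (-1 : ℚ) ^ (∑ j, n j) * gmultinomial (α - γ) n := by
  intro s
  induction s with
  | zero =>
    intro n hn γ α
    have hn0 : n = 0 := by
      funext j
      have h := Finset.single_le_sum (f := fun k => n k) (fun k _ => Nat.zero_le _)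
        (Finset.mem_univ j)
      have h2 : n j ≤ ∑ k, n k := by simpa using h
      simp only [Pi.zero_apply]
      omega
    subst hn0
    rw [F_nil]
    simp [gm_zero']
  | succ s ihs =>
    intro n hn γ α
    induction γ generalizing α with
    | zero =>
      rw [L_gamma0 p hp n α]
      simp
    | succ γ ihγ =>
      rw [F_rec p hp n γ α, ihγ α]
      have hterm : ∀ j, (if 1 ≤ n j then F p (n - ev j) (α + ((p j - 1 : ℕ) : ℚ)) (γ + p j) else 0)
          = if 1 ≤ n j then
              -((-1 : ℚ) ^ (∑ k, n k) * gmultinomial (α - γ - 1) (n - ev j)) else 0 := by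
        intro j
        split
        case isFalse => rfl
        case isTrue hj =>
          rw [ihs (n - ev j) (by have := sum_sub_single n j hj; omega) (γ + p j)]
          have harg : (α + ((p j - 1 : ℕ) : ℚ)) - ((γ + p j : ℕ) : ℚ) = α - γ - 1 := by
            rw [Nat.cast_sub (hp j)]
            push_cast
            ring
          rw [harg]
          have hsign : (∑ k, (n - ev j) k) + 1 = ∑ k, n k := sum_sub_single n j hj
          have hs2 : (-1 : ℚ) ^ (∑ k, (n - ev j) k) = -((-1 : ℚ) ^ (∑ k, n k)) := by
            rw [← hsign, pow_succ]
            ring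
          rw [hs2]
          ring
      rw [Finset.sum_congr rfl (fun j _ => hterm j)]
      have hneg : (∑ j, if 1 ≤ n j then
            -((-1 : ℚ) ^ (∑ k, n k) * gmultinomial (α - γ - 1) (n - ev j)) else 0)
          = -((-1 : ℚ) ^ (∑ k, n k)
              * ∑ j, if 1 ≤ n j then gmultinomial (α - γ - 1) (n - ev j) else 0) := by
        rw [Finset.mul_sum, ← Finset.sum_neg_distrib]
        apply Finset.sum_congr rfl
        intro j _
        split <;> simp
      rw [hneg]
      have hc : α - ((γ + 1 : ℕ) : ℚ) = α - γ - 1 := by push_cast; ring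
      have hc2 : α - (γ : ℚ) = (α - γ - 1) + 1 := by ring
      rw [hc, hc2, gm_pascal' (α - γ - 1) n]
      ring


end Stmt10Aux

theorem stmt_10 (t : ℕ) (ht : 1 ≤ t) (p : Fin t → ℕ) (hp : ∀ j, 1 ≤ p j)
    (γ : ℕ) (α : ℚ) (n : Fin t → ℕ) :
    ∑ i ∈ Finset.Icc (0 : Fin t → ℕ) n,
      (-1 : ℚ) ^ (∑ j, i j) *
        gmultinomial (((∑ j, (p j - 1) * (n j - i j) : ℕ) : ℚ) + α) i *
        Qvec (n - i) p γ
      = (-1 : ℚ) ^ (∑ j, n j) * gmultinomial (α - γ) n :=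
  Stmt10Aux.key p hp (∑ j, n j) n le_rfl γ α
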